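/- arXiv:0907.0175 — 3 statements merged into one kernel-verified Lean document; each statement's English description precedes it below -/
import Mathlib

section
/- Let A be a set of n positive real numbers such that |A+A| ≤ n^{1+δ}/(3 log n), where 0 < δ and n is sufficiently large. Then there exists a dyadic interval [x, 2x) containing at least n^{1-δ} elements of A. -/
open Finset Pointwise

/-- If `A` is a set of `n` positive reals with `|A+A| ≤ n^(1+δ)/(3 log n)` and `n`
is sufficiently large, then some dyadic interval `[2^j, 2^(j+1))` contains at least
`n^(1-δ)` elements of `A`. -/
theorem stmt1 (δ : ℝ) (hδ : 0 < δ) :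
    ∃ n₀ : ℕ, ∀ (A : Finset ℝ) (n : ℕ), A.card = n → n₀ < n →
      (∀ a ∈ A, 0 < a) →
      ((A + A).card : ℝ) ≤ (n : ℝ) ^ (1 + δ) / (3 * Real.log n) →
      ∃ j : ℤ, (n : ℝ) ^ (1 - δ) ≤
        ((A.filter (fun a => (2 : ℝ) ^ j ≤ a ∧ a < 2 ^ (j + 1))).card : ℝ) := by
  classical
  refine ⟨⌈Real.exp (max 6 (4 / δ))⌉₊, fun A n hcard hn hpos hsmall => ?_⟩
  by_contra hcon
  push_neg at hcon
  -- basic numeric facts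
  have hn0 : 0 < n := lt_of_le_of_lt (Nat.zero_le _) hn
  have hnR : (0:ℝ) < n := by exact_mod_cast hn0
  have hexp : Real.exp (max 6 (4/δ)) ≤ n := by
    have h1 : (⌈Real.exp (max 6 (4/δ))⌉₊ : ℝ) ≤ n := by exact_mod_cast hn.le
    exact le_trans (Nat.le_ceil _) h1
  have hlog : max 6 (4/δ) ≤ Real.log n := (Real.le_log_iff_exp_le hnR).mpr hexp
  have hlog6 : (6:ℝ) ≤ Real.log n := le_trans (le_max_left _ _) hlog
  have hnδ : (4:ℝ) ≤ (n:ℝ) ^ δ := by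
    have h4 : (4:ℝ) ≤ δ * Real.log n := by
      have h := le_trans (le_max_right 6 (4/δ)) hlog
      have := mul_le_mul_of_nonneg_left h hδ.le
      calc (4:ℝ) = δ * (4/δ) := by field_simp
        _ ≤ δ * Real.log n := this
    calc (4:ℝ) ≤ Real.exp 4 := by nlinarith [Real.add_one_le_exp (4:ℝ)]
      _ ≤ Real.exp (δ * Real.log n) := Real.exp_le_exp.mpr h4
      _ = (n:ℝ) ^ δ := by rw [Real.rpow_def_of_pos hnR, mul_comm]
  set M : ℝ := (n:ℝ) ^ (1-δ) with hM
  have hM0 : 0 < M := Real.rpow_pos_of_pos hnR _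
  have hMδ : (n:ℝ) ^ δ * M = n := by
    rw [hM, ← Real.rpow_add hnR]
    norm_num
  -- dyadic classes
  set C : ℤ → Finset ℝ := fun j => A.filter (fun a => Int.log 2 a = j) with hC
  have hCsub : ∀ j : ℤ, C j ⊆ A.filter (fun a => (2:ℝ)^j ≤ a ∧ a < 2^(j+1)) := by
    intro j a ha
    simp only [hC, mem_filter] at ha ⊢
    obtain ⟨haA, hfa⟩ := ha
    have h0 : 0 < a := hpos a haA
    refine ⟨haA, ?_, ?_⟩
    · subst hfa
      have := Int.zpow_log_le_self (R := ℝ) (b := 2) (by norm_num) h0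
      simpa using this
    · subst hfa
      have := Int.lt_zpow_succ_log_self (R := ℝ) (b := 2) (by norm_num) a
      simpa using this
  have hclass : ∀ j : ℤ, ((C j).card : ℝ) < M := fun j =>
    lt_of_le_of_lt (by exact_mod_cast card_le_card (hCsub j)) (hcon j)
  set J : Finset ℤ := A.image (fun a => Int.log 2 a) with hJ
  have hfib : ∀ a ∈ A, Int.log 2 a ∈ J := fun a ha => mem_image_of_mem _ ha
  have hsumcard : n = ∑ j ∈ J, (C j).card := by
    rw [← hcard]; exact card_eq_sum_card_fiberwise hfib
  have hJne : J.Nonempty := by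
    rw [hJ, image_nonempty, ← card_pos, hcard]; exact hn0
  set k := J.card with hk
  have hkM : (n:ℝ) < k * M := by
    have h1 : ((∑ j ∈ J, (C j).card : ℕ) : ℝ) < ∑ j ∈ J, M := by
      push_cast
      exact sum_lt_sum_of_nonempty hJne (fun j _ => hclass j)
    rw [← hsumcard] at h1
    rw [sum_const, nsmul_eq_mul] at h1
    exact h1
  have hkδ : (n:ℝ) ^ δ < k := by
    have h1 := hkM
    rw [← hMδ] at h1
    exact lt_of_mul_lt_mul_right h1 hM0.le
  set q := ⌊(n:ℝ)^δ/2⌋₊ with hq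
  have hq2 : (n:ℝ)^δ/2 - 1 < q := by
    have := Nat.lt_floor_add_one ((n:ℝ)^δ/2); linarith
  have hq1 : (q:ℝ) ≤ (n:ℝ)^δ/2 := Nat.floor_le (by positivity)
  have hq4 : (n:ℝ)^δ/4 ≤ q := by linarith
  have hqk : q ≤ k := by
    have h1 : (q:ℝ) < (k:ℝ) := by linarith
    exact_mod_cast h1.le
  -- ranks
  set r : ℤ → ℕ := fun j => (J.filter (fun i => j < i)).card with hr
  have hrk : ∀ j ∈ J, r j < k := by
    intro j hj
    have hsub : J.filter (fun i => j < i) ⊆ J.erase j := by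
      intro i hi
      simp only [mem_filter] at hi
      exact mem_erase.mpr ⟨ne_of_gt hi.2, hi.1⟩
    calc r j ≤ (J.erase j).card := card_le_card hsub
      _ < k := card_erase_lt_of_mem hj
  have hranti : ∀ j ∈ J, ∀ j' ∈ J, j < j' → r j' < r j := by
    intro j hj j' hj' hlt
    apply card_lt_card
    rw [Finset.ssubset_iff_of_subset]
    · refine ⟨j', mem_filter.mpr ⟨hj', hlt⟩, ?_⟩
      simp only [mem_filter]
      exact fun h => lt_irrefl j' h.2
    · intro i hi
      simp only [mem_filter] at hi ⊢
      exact ⟨hi.1, lt_trans hlt hi.2⟩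
  have hinj : Set.InjOn r ↑J := by
    intro a ha b hb hab
    by_contra hne
    rcases lt_or_gt_of_ne hne with h | h
    · exact absurd hab (hranti a ha b hb h).ne'
    · exact absurd hab (hranti b hb a ha h).ne
  set G := J.filter (fun j => r j < q) with hG
  have hGcard : q ≤ G.card := by
    have h1 : (J.filter (fun j => ¬ r j < q)).card ≤ (Finset.Ico q k).card := by
      apply Finset.card_le_card_of_injOn r
      · intro j hj
        simp only [mem_coe, mem_filter, not_lt] at hj
        exact Finset.mem_Ico.mpr ⟨hj.2, hrk j hj.1⟩
      · exact Set.InjOn.mono (fun x hx => mem_coe.mpr ((mem_filter.mp (mem_coe.mp hx)).1)) hinj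
    rw [Nat.card_Ico] at h1
    have h2 := Finset.card_filter_add_card_filter_not (s := J) (fun j => r j < q)
    have h3 : G.card = (J.filter (fun j => r j < q)).card := rfl
    have h4 : k = J.card := rfl
    omega
  -- N j = number of elements strictly below scale j
  set N : ℤ → ℕ := fun j => (A.filter (fun a => Int.log 2 a < j)).card with hN
  have hNbig : ∀ j ∈ G, (n:ℝ)/2 ≤ N j := by
    intro j hjG
    obtain ⟨hjJ, hjr⟩ := mem_filter.mp hjG
    set B := A.filter (fun a => j ≤ Int.log 2 a) with hB
    have hfib2 : ∀ a ∈ B, Int.log 2 a ∈ J.filter (fun i => j ≤ i) := by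
      intro a ha
      obtain ⟨haA, hale⟩ := mem_filter.mp ha
      exact mem_filter.mpr ⟨hfib a haA, hale⟩
    have h3 : B.card = ∑ i ∈ J.filter (fun i => j ≤ i), (B.filter (fun a => Int.log 2 a = i)).card :=
      card_eq_sum_card_fiberwise hfib2
    have h4 : ∀ i : ℤ, (B.filter (fun a => Int.log 2 a = i)).card ≤ (C i).card := by
      intro i
      apply card_le_card
      intro a ha
      simp only [hB, hC, mem_filter] at ha ⊢
      exact ⟨ha.1.1, ha.2⟩
    have h5 : (B.card : ℝ) < (J.filter (fun i => j ≤ i)).card * M := by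
      rw [h3]
      push_cast
      calc ∑ i ∈ J.filter (fun i => j ≤ i), ((B.filter (fun a => Int.log 2 a = i)).card : ℝ)
          < ∑ i ∈ J.filter (fun i => j ≤ i), M := by
            apply sum_lt_sum_of_nonempty ⟨j, mem_filter.mpr ⟨hjJ, le_refl j⟩⟩
            intro i _
            exact lt_of_le_of_lt (by exact_mod_cast h4 i) (hclass i)
        _ = _ := by rw [sum_const, nsmul_eq_mul]
    have h6 : (J.filter (fun i => j ≤ i)).card ≤ r j + 1 := by
      have hsub : J.filter (fun i => j ≤ i) ⊆ insert j (J.filter (fun i => j < i)) := by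
        intro i hi
        obtain ⟨hiJ, hji⟩ := mem_filter.mp hi
        rcases eq_or_lt_of_le hji with h | h
        · exact mem_insert.mpr (Or.inl h.symm)
        · exact mem_insert.mpr (Or.inr (mem_filter.mpr ⟨hiJ, h⟩))
      calc (J.filter (fun i => j ≤ i)).card ≤ (insert j (J.filter (fun i => j < i))).card :=
            card_le_card hsub
        _ ≤ r j + 1 := card_insert_le _ _
    have h7 : ((J.filter (fun i => j ≤ i)).card : ℝ) ≤ q := by
      have h8 : (J.filter (fun i => j ≤ i)).card ≤ q := le_trans h6 hjr
      exact_mod_cast h8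
    have hBq : (B.card : ℝ) < (q:ℝ) * M :=
      lt_of_lt_of_le h5 (mul_le_mul_of_nonneg_right h7 hM0.le)
    have hqM : (q:ℝ) * M ≤ (n:ℝ)/2 := by
      calc (q:ℝ) * M ≤ ((n:ℝ)^δ/2) * M := mul_le_mul_of_nonneg_right hq1 hM0.le
        _ = (n:ℝ)/2 := by rw [div_mul_eq_mul_div, hMδ]
    have hsplit : N j + B.card = n := by
      rw [← hcard, hN, hB]
      rw [← Finset.card_filter_add_card_filter_not (s := A) (fun a => Int.log 2 a < j)]
      congr 2
      apply Finset.filter_congr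
      intro a _
      simp [not_lt]
    have hsplit' : (N j : ℝ) + B.card = n := by exact_mod_cast hsplit
    linarith
  -- maxima of classes and shifted sets
  set c : ℤ → ℝ := fun j => if h : (C j).Nonempty then (C j).max' h else 0 with hc
  have hcmem : ∀ j ∈ J, c j ∈ C j := by
    intro j hj
    obtain ⟨a, ha, hfa⟩ := mem_image.mp hj
    have hne : (C j).Nonempty := ⟨a, mem_filter.mpr ⟨ha, hfa⟩⟩
    simp only [hc, dif_pos hne]
    exact max'_mem _ _
  have hcmax : ∀ j ∈ J, ∀ a ∈ C j, a ≤ c j := by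
    intro j hj a ha
    have hne : (C j).Nonempty := ⟨a, ha⟩
    simp only [hc, dif_pos hne]
    exact le_max' _ _ ha
  set S : ℤ → Finset ℝ := fun j => (A.filter (fun a => a ≤ c j)).image (fun a => c j + a) with hS
  have hcA : ∀ j ∈ J, c j ∈ A := fun j hj => (mem_filter.mp (hcmem j hj)).1
  have hclog : ∀ j ∈ J, Int.log 2 (c j) = j := fun j hj => (mem_filter.mp (hcmem j hj)).2
  have hc0 : ∀ j ∈ J, 0 < c j := fun j hj => hpos _ (hcA j hj)
  have hclb : ∀ j ∈ J, (2:ℝ)^j ≤ c j := by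
    intro j hj
    have := Int.zpow_log_le_self (R := ℝ) (b := 2) (by norm_num) (hc0 j hj)
    rw [hclog j hj] at this
    simpa using this
  have hcub : ∀ j ∈ J, c j < (2:ℝ)^(j+1) := by
    intro j hj
    have := Int.lt_zpow_succ_log_self (R := ℝ) (b := 2) (by norm_num) (c j)
    rw [hclog j hj] at this
    simpa using this
  have hSsub : ∀ j ∈ J, S j ⊆ A + A := by
    intro j hj s hs
    obtain ⟨a, ha, rfl⟩ := mem_image.mp hs
    exact add_mem_add (hcA j hj) (mem_filter.mp ha).1
  have hScard : ∀ j ∈ J, N j ≤ (S j).card := by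
    intro j hj
    have himg : (S j).card = (A.filter (fun a => a ≤ c j)).card := by
      simp only [hS]
      exact card_image_of_injective _ (add_right_injective (c j))
    rw [himg, hN]
    apply card_le_card
    intro a ha
    obtain ⟨haA, halt⟩ := mem_filter.mp ha
    refine mem_filter.mpr ⟨haA, ?_⟩
    have h1 : a < (2:ℝ)^(Int.log 2 a + 1) := by
      have := Int.lt_zpow_succ_log_self (R := ℝ) (b := 2) (by norm_num) a
      simpa using this
    have h2 : (2:ℝ)^(Int.log 2 a + 1) ≤ (2:ℝ)^j :=
      zpow_le_zpow_right₀ one_le_two (by omega)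
    exact le_of_lt (lt_of_lt_of_le h1 (le_trans h2 (hclb j hj)))
  have hSmem : ∀ j ∈ J, ∀ s ∈ S j, (2:ℝ)^j ≤ s ∧ s < (2:ℝ)^(j+2) := by
    intro j hj s hs
    obtain ⟨a, ha, rfl⟩ := mem_image.mp hs
    obtain ⟨haA, hale⟩ := mem_filter.mp ha
    have ha0 : 0 < a := hpos a haA
    constructor
    · calc (2:ℝ)^j ≤ c j := hclb j hj
        _ ≤ c j + a := by linarith
    · have h1 : c j + a ≤ 2 * c j := by linarith
      have h2 : 2 * c j < 2 * (2:ℝ)^(j+1) := by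
        have := hcub j hj; linarith
      have he : j + 2 = (j + 1) + 1 := by ring
      have h3 : (2:ℝ)^(j+2) = (2:ℝ)^(j+1) * 2 := by
        rw [he, zpow_add_one₀ (by norm_num : (2:ℝ) ≠ 0)]
      linarith
  have hmul : ∀ s ∈ A + A, (J.filter (fun j => s ∈ S j)).card ≤ 2 := by
    intro s _
    rcases (J.filter (fun j => s ∈ S j)).eq_empty_or_nonempty with he | hne
    · rw [he]; simp
    · obtain ⟨j₀, hj₀⟩ := hne
      obtain ⟨hj₀J, hj₀S⟩ := mem_filter.mp hj₀
      have hs0 : 0 < s := by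
        have h := (hSmem j₀ hj₀J s hj₀S).1
        have : (0:ℝ) < (2:ℝ)^j₀ := by positivity
        linarith
      set L := Int.log 2 s with hL
      have hsub : J.filter (fun j => s ∈ S j) ⊆ ({L - 1, L} : Finset ℤ) := by
        intro j hj
        obtain ⟨hjJ, hjS⟩ := mem_filter.mp hj
        obtain ⟨hlow, hhigh⟩ := hSmem j hjJ s hjS
        have h1 : j ≤ L := by
          rw [hL]
          rw [← Int.zpow_le_iff_le_log (by norm_num : 1 < 2) hs0]
          simpa using hlow
        have h2 : L < j + 2 := by
          have hLs : ((2:ℕ):ℝ)^L ≤ s := Int.zpow_log_le_self (by norm_num) hs0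
          have : ((2:ℕ):ℝ)^L < ((2:ℕ):ℝ)^(j+2) := by
            push_cast
            calc (2:ℝ)^L ≤ s := by simpa using hLs
              _ < (2:ℝ)^(j+2) := hhigh
          exact (zpow_lt_zpow_iff_right₀ (by norm_num : (1:ℝ) < ((2:ℕ):ℝ))).mp this
        have : j = L - 1 ∨ j = L := by omega
        simp only [mem_insert, mem_singleton]
        exact this
      calc (J.filter (fun j => s ∈ S j)).card ≤ ({L - 1, L} : Finset ℤ).card :=
            card_le_card hsub
        _ ≤ 2 := by
            calc ({L - 1, L} : Finset ℤ).card ≤ ({L} : Finset ℤ).card + 1 := card_insert_le _ _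
              _ = 2 := by simp
  have hcount : ∑ j ∈ J, (S j).card ≤ 2 * (A + A).card := by
    calc ∑ j ∈ J, (S j).card
        = ∑ j ∈ J, ∑ s ∈ A + A, (if s ∈ S j then 1 else 0) := by
          apply sum_congr rfl
          intro j hj
          rw [← Finset.card_filter]
          congr 1
          rw [Finset.filter_mem_eq_inter, inter_eq_right.mpr (hSsub j hj)]
      _ = ∑ s ∈ A + A, ∑ j ∈ J, (if s ∈ S j then 1 else 0) := sum_comm
      _ = ∑ s ∈ A + A, (J.filter (fun j => s ∈ S j)).card := by
          apply sum_congr rfl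
          intro s _
          rw [Finset.card_filter]
      _ ≤ ∑ _s ∈ A + A, 2 := sum_le_sum hmul
      _ = 2 * (A + A).card := by rw [sum_const, smul_eq_mul, mul_comm]
  -- the final chain
  have hfinal : (q:ℝ) * ((n:ℝ)/2) ≤ 2 * ((A+A).card : ℝ) := by
    calc (q:ℝ) * ((n:ℝ)/2)
        ≤ (G.card:ℝ) * ((n:ℝ)/2) := by
          apply mul_le_mul_of_nonneg_right _ (by positivity)
          exact_mod_cast hGcard
      _ = ∑ _j ∈ G, (n:ℝ)/2 := by rw [sum_const, nsmul_eq_mul]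
      _ ≤ ∑ j ∈ G, (N j : ℝ) := sum_le_sum hNbig
      _ ≤ ∑ j ∈ J, (N j : ℝ) := by
          apply sum_le_sum_of_subset_of_nonneg (filter_subset _ _)
          intro j _ _
          positivity
      _ ≤ ∑ j ∈ J, ((S j).card : ℝ) := by
          apply sum_le_sum
          intro j hj
          exact_mod_cast hScard j hj
      _ ≤ 2 * ((A+A).card : ℝ) := by exact_mod_cast hcount
  set P : ℝ := (n:ℝ)^(1+δ) with hP
  have hP0 : 0 < P := Real.rpow_pos_of_pos hnR _
  have hPnn : P = (n:ℝ) * (n:ℝ)^δ := by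
    rw [hP, Real.rpow_add hnR, Real.rpow_one]
  have h18 : P/8 ≤ (q:ℝ) * ((n:ℝ)/2) := by
    have h1 : ((n:ℝ)^δ/4) * ((n:ℝ)/2) ≤ (q:ℝ) * ((n:ℝ)/2) :=
      mul_le_mul_of_nonneg_right hq4 (by positivity)
    have h2 : P/8 = ((n:ℝ)^δ/4) * ((n:ℝ)/2) := by
      rw [hPnn]; ring
    linarith
  have hlogpos : (0:ℝ) < 3 * Real.log n := by linarith
  have hup : 2 * ((A+A).card:ℝ) ≤ 2 * (P / (3*Real.log n)) := by linarith
  have hmain : P/8 ≤ (2*P) / (3*Real.log n) := by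
    rw [mul_div_assoc]
    linarith
  have hiff := (div_le_div_iff₀ (by norm_num : (0:ℝ) < 8) hlogpos).mp hmain
  -- hiff : P * (3 * log n) ≤ 2 * P * 8
  have h20 : P * (3 * 6) ≤ P * (3 * Real.log n) :=
    mul_le_mul_of_nonneg_left (by linarith) hP0.le
  linarith
end

section
/- Let A = {x+1, x+2, ..., x+n} with x ≥ n^3. Then for every pair a = x+j, b = x+k in A there exist perturbations δ_{a,b}, δ'_{a,b} ∈ [−1, 1] such that the perturbed product set P = {(a + δ_{a,b})(b + δ'_{a,b}) : a, b ∈ A} satisfies |P| ≤ 2n − 1, and hence |A+A| + |P| ≤ 4n − 2. -/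
open Finset Pointwise

/-- For `A = {x+1, ..., x+n}` with `x ≥ n³`, there exist perturbations in `[-1,1]`
making the perturbed product set have at most `2n - 1` elements, so that
`|A+A| + |P| ≤ 4n - 2`. -/
theorem stmt9 (n : ℕ) (hn : 1 ≤ n) (x : ℝ) (hx : (n : ℝ) ^ 3 ≤ x)
    (A : Finset ℝ) (hA : A = (Finset.Icc 1 n).image (fun j : ℕ => x + (j : ℝ))) :
    ∃ δ δ' : ℝ → ℝ → ℝ,
      (∀ a ∈ A, ∀ b ∈ A, |δ a b| ≤ 1 ∧ |δ' a b| ≤ 1) ∧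
      ∀ P : Finset ℝ,
        P = (A ×ˢ A).image
          (fun p => (p.1 + δ p.1 p.2) * (p.2 + δ' p.1 p.2)) →
        P.card ≤ 2 * n - 1 ∧ (A + A).card + P.card ≤ 4 * n - 2 := by
  have hn' : (1:ℝ) ≤ (n:ℝ) := by exact_mod_cast hn
  have hxpos : (0:ℝ) < x := lt_of_lt_of_le (by positivity) hx
  have hmem : ∀ a ∈ A, ∃ j : ℕ, 1 ≤ j ∧ j ≤ n ∧ a = x + (j:ℝ) := by
    intro a ha
    rw [hA] at ha
    simp only [mem_image, mem_Icc] at ha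
    obtain ⟨j, ⟨hj1, hjn⟩, rfl⟩ := ha
    exact ⟨j, hj1, hjn, rfl⟩
  refine ⟨fun a b => (a - b)^2 / (4 * b), fun _ _ => 0, ?_, ?_⟩
  · intro a ha b hb
    obtain ⟨j, hj1, hjn, rfl⟩ := hmem a ha
    obtain ⟨k, hk1, hkn, rfl⟩ := hmem b hb
    have hk1' : (1:ℝ) ≤ (k:ℝ) := by exact_mod_cast hk1
    have hbpos : (0:ℝ) < x + (k:ℝ) := by linarith
    have hj' : (j:ℝ) ≤ (n:ℝ) := by exact_mod_cast hjn
    have hk' : (k:ℝ) ≤ (n:ℝ) := by exact_mod_cast hkn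
    have hj1' : (1:ℝ) ≤ (j:ℝ) := by exact_mod_cast hj1
    constructor
    · rw [abs_of_nonneg (by positivity), div_le_one (by positivity)]
      have h1 : ((x + (j:ℝ)) - (x + (k:ℝ)))^2 = ((j:ℝ) - (k:ℝ))^2 := by ring
      rw [h1]
      nlinarith [sq_nonneg ((j:ℝ) - (k:ℝ)), sq_nonneg ((n:ℝ) - 1)]
    · simp
  · intro P hP
    have hsum : (A + A).card ≤ 2 * n - 1 := by
      have hsub : A + A ⊆ (Finset.Icc 2 (2*n)).image (fun m : ℕ => 2*x + (m:ℝ)) := by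
        intro s hs
        rw [Finset.mem_add] at hs
        obtain ⟨a, ha, b, hb, rfl⟩ := hs
        obtain ⟨j, hj1, hjn, rfl⟩ := hmem a ha
        obtain ⟨k, hk1, hkn, rfl⟩ := hmem b hb
        simp only [mem_image, mem_Icc]
        exact ⟨j + k, ⟨by omega, by omega⟩, by push_cast; ring⟩
      calc (A + A).card ≤ ((Finset.Icc 2 (2*n)).image (fun m : ℕ => 2*x + (m:ℝ))).card :=
            Finset.card_le_card hsub
        _ ≤ (Finset.Icc 2 (2*n)).card := Finset.card_image_le
        _ = 2 * n - 1 := by rw [Nat.card_Icc]; omega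
    have hPcard : P.card ≤ 2 * n - 1 := by
      have hPeq : P = ((A ×ˢ A).image (fun p : ℝ × ℝ => p.1 + p.2)).image
          (fun s => s^2 / 4) := by
        rw [hP, Finset.image_image]
        apply Finset.image_congr
        intro p hp
        rw [Finset.mem_coe, Finset.mem_product] at hp
        obtain ⟨k, hk1, hkn, hb⟩ := hmem p.2 hp.2
        have hk1' : (1:ℝ) ≤ (k:ℝ) := by exact_mod_cast hk1
        have hbpos : (0:ℝ) < p.2 := by rw [hb]; linarith
        have hbne : p.2 ≠ 0 := ne_of_gt hbpos
        simp only [Function.comp]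
        field_simp
        ring
      rw [hPeq, Finset.image_add_product]
      calc ((A + A).image (fun s => s^2/4)).card ≤ (A + A).card := Finset.card_image_le
        _ ≤ 2 * n - 1 := hsum
    exact ⟨hPcard, by omega⟩
end

section
/- For x ≥ 4n^2 and the set A = {x+1, ..., x+n}, for every a, b ∈ A there exists δ_{a,b} with |δ_{a,b}| ≤ C n^2/x (for an absolute constant C) such that (a + δ_{a,b})·b = x^2(1 + (j+k)/x), where j = a − x and k = b − x. Consequently the perturbed product set {(a+δ_{a,b})b : a,b ∈ A} is contained in the arithmetic progression {x^2 + (m)x : m = 2, ..., 2n} and has at most 2n−1 elements. -/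
open Finset

/-- For `A = {x+1, ..., x+n}` with `x ≥ 4n²`, there are perturbations
`|δ_{a,b}| ≤ Cn²/x` (with `C` absolute) so that `(a+δ_{a,b})·b = x²(1+(j+k)/x)`
where `j = a - x`, `k = b - x`; hence the perturbed product set is contained in
the arithmetic progression `{x² + mx : m = 2, ..., 2n}` and has at most `2n - 1`
elements. -/
theorem stmt18 :
    ∃ C : ℝ, 0 < C ∧
      ∀ (n : ℕ) (x : ℝ), 1 ≤ n → 4 * (n : ℝ) ^ 2 ≤ x →
      ∀ A : Finset ℝ, A = (Finset.Icc 1 n).image (fun j : ℕ => x + (j : ℝ)) →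
      ∃ δ : ℝ → ℝ → ℝ,
        (∀ a ∈ A, ∀ b ∈ A,
          |δ a b| ≤ C * (n : ℝ) ^ 2 / x ∧
          (a + δ a b) * b = x ^ 2 * (1 + ((a - x) + (b - x)) / x)) ∧
        ∀ P : Finset ℝ,
          P = (A ×ˢ A).image (fun p => (p.1 + δ p.1 p.2) * p.2) →
          P ⊆ (Finset.Icc 2 (2 * n)).image (fun m : ℕ => x ^ 2 + (m : ℝ) * x) ∧
          P.card ≤ 2 * n - 1 := by
  refine ⟨1, one_pos, ?_⟩
  intro n x hn hx A hA
  have hn1 : (1:ℝ) ≤ n := by exact_mod_cast hn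
  have hx0 : (0:ℝ) < x := lt_of_lt_of_le (by positivity) hx
  refine ⟨fun a b => x ^ 2 * (1 + ((a - x) + (b - x)) / x) / b - a, ?_, ?_⟩
  · intro a ha b hb
    rw [hA] at ha hb
    obtain ⟨j, hj, rfl⟩ := Finset.mem_image.1 ha
    obtain ⟨k, hk, rfl⟩ := Finset.mem_image.1 hb
    simp only [Finset.mem_Icc] at hj hk
    have hj1 : (1:ℝ) ≤ j := by exact_mod_cast hj.1
    have hjn : (j:ℝ) ≤ n := by exact_mod_cast hj.2
    have hk1 : (1:ℝ) ≤ k := by exact_mod_cast hk.1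
    have hkn : (k:ℝ) ≤ n := by exact_mod_cast hk.2
    have hb0 : (0:ℝ) < x + k := by linarith
    constructor
    · have hδ : x ^ 2 * (1 + ((x + (j:ℝ) - x) + (x + (k:ℝ) - x)) / x) / (x + k) - (x + j)
          = -((j:ℝ) * k) / (x + k) := by
        field_simp
        ring
      beta_reduce
      rw [hδ, abs_div, abs_neg, abs_of_nonneg (by positivity), abs_of_pos hb0]
      rw [div_le_div_iff₀ hb0 hx0, one_mul]
      have h1 : (j:ℝ)*k ≤ (n:ℝ)*n := mul_le_mul hjn hkn (by linarith) (by linarith)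
      nlinarith [h1]
    · field_simp
      ring
  · intro P hP
    have hsub : P ⊆ (Finset.Icc 2 (2 * n)).image (fun m : ℕ => x ^ 2 + (m : ℝ) * x) := by
      rw [hP]
      intro y hy
      obtain ⟨⟨a, b⟩, hab, rfl⟩ := Finset.mem_image.1 hy
      rw [Finset.mem_product] at hab
      obtain ⟨ha, hb⟩ := hab
      rw [hA] at ha hb
      obtain ⟨j, hj, rfl⟩ := Finset.mem_image.1 ha
      obtain ⟨k, hk, rfl⟩ := Finset.mem_image.1 hb
      simp only [Finset.mem_Icc] at hj hk
      have hk1 : (1:ℝ) ≤ k := by exact_mod_cast hk.1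
      have hb0 : (0:ℝ) < x + k := by linarith
      refine Finset.mem_image.2 ⟨j + k, Finset.mem_Icc.2 ⟨by omega, by omega⟩, ?_⟩
      have hb' : (x + (k:ℝ)) ≠ 0 := ne_of_gt hb0
      push_cast
      field_simp
      ring
    exact ⟨hsub, le_trans (Finset.card_le_card hsub)
      (le_trans Finset.card_image_le (by rw [Nat.card_Icc]; omega))⟩
end
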